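/- Let ${\cal E}_E(|y\rangle\langle y|) = \sum_{x \in \mathbb{F}_2^l} P(x) |P,y,x\rangle\langle P,y,x|$ where $|P,y,x\rangle = \sum_{z \in \mathbb{F}_2^l} (-1)^{z \cdot y}\sqrt{P(z|x)}\,|(x,z)\rangle$, for a joint distribution $P(x,z)$ on $\mathbb{F}_2^l \times \mathbb{F}_2^l$. Then for any $y, y' \in \mathbb{F}_2^l$, the fidelity satisfies $F({\cal E}_E(|y\rangle\langle y|), {\cal E}_E(|y'\rangle\langle y'|)) \geq 1 - 2P_{ph}$, where $P_{ph} = 1 - \sum_x P(x, 0)$. -/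

import Mathlib

open Matrix
open scoped ComplexOrder

lemma vmv_mul_vmv {ι : Type*} [Fintype ι] (a b c d : ι → ℂ) :
    vecMulVec a b * vecMulVec c d = (b ⬝ᵥ c) • vecMulVec a d := by
  ext i j
  simp only [Matrix.mul_apply, vecMulVec_apply, Matrix.smul_apply, dotProduct,
    Finset.sum_mul, smul_eq_mul]
  exact Finset.sum_congr rfl fun k _ => by ring

lemma trace_vmv {ι : Type*} [Fintype ι] (a b : ι → ℂ) :
    (vecMulVec a b).trace = a ⬝ᵥ b := by
  simp [Matrix.trace, Matrix.diag, vecMulVec_apply, dotProduct]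

lemma psd_vmv {ι : Type*} [Fintype ι] [DecidableEq ι] (a : ι → ℂ) :
    (vecMulVec a (star a)).PosSemidef := by
  rw [vecMulVec_eq (ι := Unit), ← conjTranspose_replicateCol]
  exact posSemidef_self_mul_conjTranspose _

lemma psd_smul_vmv {ι : Type*} [Fintype ι] [DecidableEq ι] (r : ℝ) (hr : 0 ≤ r) (a : ι → ℂ) :
    ((r : ℂ) • vecMulVec a (star a)).PosSemidef := by
  have h : (r : ℂ) • vecMulVec a (star a)
      = vecMulVec ((Real.sqrt r : ℂ) • a) (star ((Real.sqrt r : ℂ) • a)) := by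
    ext i j
    simp only [Matrix.smul_apply, vecMulVec_apply, Pi.smul_apply, Pi.star_apply, smul_eq_mul,
      star_mul', Complex.star_def, Complex.conj_ofReal]
    have h2 : (Real.sqrt r : ℂ) * Real.sqrt r = (r : ℂ) := by
      rw [← Complex.ofReal_mul, Real.mul_self_sqrt hr]
    calc (r:ℂ) * (a i * star (a j)) = ((Real.sqrt r : ℂ) * Real.sqrt r) * (a i * star (a j)) := by
          rw [h2]
      _ = Real.sqrt r * a i * (star (a j) * Real.sqrt r) := by ring
      _ = Real.sqrt r * a i * ((starRingEnd ℂ) (a j) * Real.sqrt r) := rfl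
      _ = Real.sqrt r * a i * (Real.sqrt r * (starRingEnd ℂ) (a j)) := by ring
  rw [h]
  exact psd_vmv _

set_option maxHeartbeats 1000000 in
lemma psd_sum_smul_vmv {ι κ : Type*} [Fintype ι] [DecidableEq ι] [Fintype κ]
    (r : κ → ℝ) (hr : ∀ x, 0 ≤ r x) (v : κ → ι → ℂ) (hv : ∀ x, star (v x) = v x) :
    (∑ x, (r x : ℂ) • vecMulVec (v x) (v x)).PosSemidef := by
  have : ∀ x : κ, ((r x : ℂ) • vecMulVec (v x) (v x)).PosSemidef := by
    intro x
    have h := psd_smul_vmv (r x) (hr x) (v x)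
    rwa [hv x] at h
  classical
  have key : ∀ s : Finset κ, (∑ x ∈ s, (r x : ℂ) • vecMulVec (v x) (v x)).PosSemidef := by
    intro s
    induction s using Finset.induction with
    | empty => simpa using (Matrix.PosSemidef.zero (n := ι) (R := ℂ))
    | @insert _ _ h ih =>
      rw [Finset.sum_insert h]
      exact (this _).add ih
  exact key Finset.univ

open Classical in
/-- The positive-semidefinite square root of a matrix (junk value `0` off the PSD cone). -/
noncomputable def msqrt {ι : Type*} [Fintype ι] [DecidableEq ι]
    (A : Matrix ι ι ℂ) : Matrix ι ι ℂ :=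
  if h : A.PosSemidef then
    h.1.eigenvectorUnitary.1 * diagonal ((↑) ∘ (√·) ∘ h.1.eigenvalues) *
      (star h.1.eigenvectorUnitary : Matrix ι ι ℂ)
  else 0

/-- The Uhlmann fidelity `F(ρ, ρ') = Tr √(√ρ' ρ √ρ')`. -/
noncomputable def fidelity {ι : Type*} [Fintype ι] [DecidableEq ι]
    (ρ ρ' : Matrix ι ι ℂ) : ℝ :=
  ((msqrt (msqrt ρ' * ρ * msqrt ρ')).trace).re

/-- The marginal `P(x) = ∑ z P(x, z)`. -/
noncomputable def margP (l : ℕ)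
    (P : (Fin l → ZMod 2) × (Fin l → ZMod 2) → ℝ) (x : Fin l → ZMod 2) : ℝ :=
  ∑ z, P (x, z)

/-- Eve's vector `|P,y,x⟩ = ∑ z (-1)^{z·y} √(P(z|x)) |(x,z)⟩`. -/
noncomputable def eveKet (l : ℕ)
    (P : (Fin l → ZMod 2) × (Fin l → ZMod 2) → ℝ)
    (y x : Fin l → ZMod 2) :
    ((Fin l → ZMod 2) × (Fin l → ZMod 2)) → ℂ :=
  fun w =>
    if w.1 = x then
      (-1 : ℂ) ^ ((w.2 ⬝ᵥ y : ZMod 2)).val *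
        (Real.sqrt (P (x, w.2) / margP l P x) : ℝ)
    else 0

/-- Eve's state `ρ_y = ∑ x P(x) |P,y,x⟩⟨P,y,x|` after Alice sends `|y⟩` in the `+`
basis through a Pauli channel with error distribution `P`. -/
noncomputable def eveState (l : ℕ)
    (P : (Fin l → ZMod 2) × (Fin l → ZMod 2) → ℝ)
    (y : Fin l → ZMod 2) :
    Matrix ((Fin l → ZMod 2) × (Fin l → ZMod 2))
      ((Fin l → ZMod 2) × (Fin l → ZMod 2)) ℂ :=
  ∑ x, (margP l P x : ℂ) • Matrix.vecMulVec (eveKet l P y x) (star (eveKet l P y x))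

lemma msqrt_eq {ι : Type*} [Fintype ι] [DecidableEq ι] {A B : Matrix ι ι ℂ}
    (hB : B.PosSemidef) (h : B ^ 2 = A) : msqrt A = B := by
  have hA : A.PosSemidef := h ▸ hB.pow 2
  rw [msqrt, dif_pos hA]
  open MatrixOrder in
  have e := hA.1.cfc_eq Real.sqrt
  open MatrixOrder in
  have e2 := CFC.sqrt_eq_real_sqrt A hA.nonneg
  rw [IsHermitian.cfc, Unitary.conjStarAlgAut_apply] at e
  open MatrixOrder in
  rw [cfcₙ_eq_cfc, e] at e2
  open MatrixOrder in
  have e3 : CFC.sqrt A = B := by rw [← h]; exact CFC.sqrt_sq B hB.nonneg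
  exact e2.symm.trans e3


/-- product of two sums of `vecMulVec`s with cross terms vanishing. -/
lemma sum_smul_vmv_mul {ι κ : Type*} [Fintype ι] [Fintype κ] [DecidableEq κ]
    (f g d : κ → ℂ) (u u' w w' : κ → ι → ℂ)
    (h : ∀ x x', u' x ⬝ᵥ w x' = if x = x' then d x else 0) :
    (∑ x, f x • vecMulVec (u x) (u' x)) * (∑ x, g x • vecMulVec (w x) (w' x))
      = ∑ x, (f x * g x * d x) • vecMulVec (u x) (w' x) := by
  rw [Finset.sum_mul_sum]
  rw [Finset.sum_comm]
  refine Finset.sum_congr rfl fun x _ => ?_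
  rw [Finset.sum_eq_single x]
  · rw [smul_mul_smul_comm, vmv_mul_vmv, h, if_pos rfl, smul_smul]
  · intro b _ hb
    rw [smul_mul_smul_comm, vmv_mul_vmv, h, if_neg hb]
    simp
  · simp

section Eve

variable (l : ℕ) (P : (Fin l → ZMod 2) × (Fin l → ZMod 2) → ℝ)

/-- real-valued version of the ket -/
noncomputable def rket (y x : Fin l → ZMod 2) :
    ((Fin l → ZMod 2) × (Fin l → ZMod 2)) → ℝ :=
  fun w =>
    if w.1 = x then
      (-1 : ℝ) ^ ((w.2 ⬝ᵥ y : ZMod 2)).val * Real.sqrt (P (x, w.2) / margP l P x)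
    else 0

lemma eveKet_eq (y x : Fin l → ZMod 2) :
    eveKet l P y x = fun w => ((rket l P y x w : ℝ) : ℂ) := by
  funext w
  simp only [eveKet, rket]
  split
  · push_cast; ring
  · simp

lemma star_eveKet (y x : Fin l → ZMod 2) :
    star (eveKet l P y x) = eveKet l P y x := by
  rw [eveKet_eq]
  funext w
  simp [Complex.conj_ofReal]

/-- the inner product `⟨P,y,x|P,y',x⟩` as a real number -/
noncomputable def cc (y y' x : Fin l → ZMod 2) : ℝ :=
  ∑ z, ((-1 : ℝ) ^ ((z ⬝ᵥ y : ZMod 2)).val * (-1 : ℝ) ^ ((z ⬝ᵥ y' : ZMod 2)).val) *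
    (P (x, z) / margP l P x)

variable (hP0 : ∀ w, 0 ≤ P w)

include hP0 in
lemma margP_nonneg (x : Fin l → ZMod 2) : 0 ≤ margP l P x :=
  Finset.sum_nonneg fun z _ => hP0 (x, z)

include hP0 in
lemma margP_eq_zero (x : Fin l → ZMod 2) (h : margP l P x = 0) :
    ∀ z, P (x, z) = 0 := by
  intro z
  have := (Finset.sum_eq_zero_iff_of_nonneg (fun z _ => hP0 (x, z))).mp h
  exact this z (Finset.mem_univ z)

include hP0 in
lemma q_nonneg (x z : Fin l → ZMod 2) : 0 ≤ P (x, z) / margP l P x :=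
  div_nonneg (hP0 _) (margP_nonneg l P hP0 x)

include hP0 in
lemma rket_dot (y y' x x' : Fin l → ZMod 2) :
    rket l P y x ⬝ᵥ rket l P y' x' = if x = x' then cc l P y y' x else 0 := by
  rw [dotProduct, Fintype.sum_prod_type]
  by_cases hxx : x = x'
  · subst hxx
    rw [if_pos rfl, cc]
    rw [Finset.sum_eq_single x]
    · refine Finset.sum_congr rfl fun b _ => ?_
      simp only [rket, if_pos rfl]
      have hq := q_nonneg l P hP0 x b
      calc (-1 : ℝ) ^ ((b ⬝ᵥ y : ZMod 2)).val * Real.sqrt (P (x, b) / margP l P x) *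
            ((-1 : ℝ) ^ ((b ⬝ᵥ y' : ZMod 2)).val * Real.sqrt (P (x, b) / margP l P x))
          = (-1 : ℝ) ^ ((b ⬝ᵥ y : ZMod 2)).val * (-1 : ℝ) ^ ((b ⬝ᵥ y' : ZMod 2)).val *
            (Real.sqrt (P (x, b) / margP l P x) * Real.sqrt (P (x, b) / margP l P x)) := by
            ring
        _ = _ := by rw [Real.mul_self_sqrt hq]
    · intro a _ ha
      refine Finset.sum_eq_zero fun b _ => ?_
      simp [rket, ha]
    · simp
  · rw [if_neg hxx]
    refine Finset.sum_eq_zero fun a _ => ?_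
    refine Finset.sum_eq_zero fun b _ => ?_
    by_cases hax : a = x
    · have : a ≠ x' := by rw [hax]; exact hxx
      simp [rket, this]
    · simp [rket, hax]

include hP0 in
lemma eveKet_dot (y y' x x' : Fin l → ZMod 2) :
    eveKet l P y x ⬝ᵥ eveKet l P y' x' =
      if x = x' then ((cc l P y y' x : ℝ) : ℂ) else 0 := by
  rw [eveKet_eq, eveKet_eq, dotProduct]
  have : ∀ w, ((rket l P y x w : ℝ) : ℂ) * ((rket l P y' x' w : ℝ) : ℂ)
      = (((rket l P y x w * rket l P y' x' w : ℝ)) : ℂ) := fun w => by push_cast; ring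
  simp_rw [this]
  rw [← Complex.ofReal_sum]
  rw [show ∑ w, rket l P y x w * rket l P y' x' w = rket l P y x ⬝ᵥ rket l P y' x' from rfl]
  rw [rket_dot l P hP0 y y' x x']
  split <;> simp

end Eve

lemma neg_one_le_eps (n m : ℕ) : (-1 : ℝ) ≤ (-1) ^ n * (-1) ^ m := by
  rcases Nat.even_or_odd n with hn | hn <;> rcases Nat.even_or_odd m with hm | hm <;>
    simp [hn.neg_one_pow, hm.neg_one_pow]

section Eve2

variable (l : ℕ) (P : (Fin l → ZMod 2) × (Fin l → ZMod 2) → ℝ)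
variable (hP0 : ∀ w, 0 ≤ P w)

lemma cc_comm (y y' x : Fin l → ZMod 2) : cc l P y y' x = cc l P y' y x := by
  refine Finset.sum_congr rfl fun z _ => by ring

include hP0 in
lemma cc_diag (y x : Fin l → ZMod 2) :
    cc l P y y x = if margP l P x = 0 then 0 else 1 := by
  rw [cc]
  by_cases h : margP l P x = 0
  · rw [if_pos h]
    refine Finset.sum_eq_zero fun z _ => ?_
    rw [margP_eq_zero l P hP0 x h z]
    simp
  · rw [if_neg h]
    have he : ∀ z : Fin l → ZMod 2,
        ((-1 : ℝ) ^ ((z ⬝ᵥ y : ZMod 2)).val * (-1 : ℝ) ^ ((z ⬝ᵥ y : ZMod 2)).val) *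
          (P (x, z) / margP l P x) = P (x, z) / margP l P x := by
      intro z
      rw [← mul_pow]
      norm_num
    simp_rw [he]
    rw [← Finset.sum_div]
    exact div_self h

end Eve2


/-- For any `y, y'`, the fidelity between the corresponding Eve states is at least
`1 - 2 P_ph`, where `P_ph = 1 - ∑ x P(x, 0)` is the phase error probability. -/
theorem fidelity_eveState_ge (l : ℕ)
    (P : (Fin l → ZMod 2) × (Fin l → ZMod 2) → ℝ)
    (hP0 : ∀ w, 0 ≤ P w) (hP1 : ∑ w, P w = 1)
    (y y' : Fin l → ZMod 2) :
    fidelity (eveState l P y) (eveState l P y') ≥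
      1 - 2 * (1 - ∑ x, P (x, 0)) := by

  set v := eveKet l P y with hv
  set v' := eveKet l P y' with hv'
  set m := fun x => margP l P x with hm
  set c := fun x => cc l P y y' x with hc
  have hmnn : ∀ x, 0 ≤ m x := fun x => margP_nonneg l P hP0 x
  -- rewrite eveStates without stars
  have hρ : ∀ yy, eveState l P yy =
      ∑ x, ((margP l P x : ℝ) : ℂ) • vecMulVec (eveKet l P yy x) (eveKet l P yy x) := by
    intro yy
    simp only [eveState, star_eveKet]
  -- the square root of ρ'
  set S := ∑ x, ((Real.sqrt (m x) : ℝ) : ℂ) • vecMulVec (v' x) (v' x) with hS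
  have hSpsd : S.PosSemidef :=
    psd_sum_smul_vmv _ (fun x => Real.sqrt_nonneg _) _ (fun x => star_eveKet l P y' x)
  have hS2 : S ^ 2 = eveState l P y' := by
    rw [pow_two, hS, sum_smul_vmv_mul _ _ (fun x => ((cc l P y' y' x : ℝ) : ℂ)) _ _ _ _
      (fun x x' => eveKet_dot l P hP0 y' y' x x'), hρ y']
    refine Finset.sum_congr rfl fun x _ => ?_
    congr 1
    have hr : Real.sqrt (m x) * Real.sqrt (m x) * cc l P y' y' x = m x := by
      rw [cc_diag l P hP0 y' x]
      by_cases h : margP l P x = 0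
      · rw [if_pos h]; simp [hm, h]
      · rw [if_neg h, mul_one, Real.mul_self_sqrt (hmnn x)]
    exact_mod_cast hr
  have hmsq' : msqrt (eveState l P y') = S := msqrt_eq hSpsd hS2
  -- the middle matrix and its square root
  have hM : S * eveState l P y * S =
      ∑ x, (((m x * c x) ^ 2 : ℝ) : ℂ) • vecMulVec (v' x) (v' x) := by
    rw [hρ y, hS]
    rw [sum_smul_vmv_mul _ _ (fun x => ((cc l P y' y x : ℝ) : ℂ)) _ _ _ _
      (fun x x' => eveKet_dot l P hP0 y' y x x')]
    rw [sum_smul_vmv_mul _ _ (fun x => ((cc l P y y' x : ℝ) : ℂ)) _ _ _ _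
      (fun x x' => eveKet_dot l P hP0 y y' x x')]
    refine Finset.sum_congr rfl fun x _ => ?_
    congr 1
    have hr : Real.sqrt (m x) * m x * cc l P y' y x * Real.sqrt (m x) * cc l P y y' x
        = (m x * c x) ^ 2 := by
      rw [cc_comm l P y' y x]
      calc Real.sqrt (m x) * m x * cc l P y y' x * Real.sqrt (m x) * cc l P y y' x
          = (Real.sqrt (m x) * Real.sqrt (m x)) * (m x * cc l P y y' x * cc l P y y' x) := by
            ring
        _ = (m x * c x) ^ 2 := by rw [Real.mul_self_sqrt (hmnn x)]; rw [hc]; ring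
    exact_mod_cast hr
  set T := ∑ x, ((m x * |c x| : ℝ) : ℂ) • vecMulVec (v' x) (v' x) with hT
  have hTpsd : T.PosSemidef :=
    psd_sum_smul_vmv _ (fun x => mul_nonneg (hmnn x) (abs_nonneg _)) _
      (fun x => star_eveKet l P y' x)
  have hT2 : T ^ 2 = S * eveState l P y * S := by
    rw [hM, pow_two, hT, sum_smul_vmv_mul _ _ (fun x => ((cc l P y' y' x : ℝ) : ℂ)) _ _ _ _
      (fun x x' => eveKet_dot l P hP0 y' y' x x')]
    refine Finset.sum_congr rfl fun x _ => ?_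
    congr 1
    have hr : (m x * |c x|) * (m x * |c x|) * cc l P y' y' x = (m x * c x) ^ 2 := by
      rw [cc_diag l P hP0 y' x]
      by_cases h : margP l P x = 0
      · rw [if_pos h]
        have : m x = 0 := h
        simp [this]
      · rw [if_neg h, mul_one]
        have : |c x| * |c x| = c x * c x := by
          rw [← abs_mul, abs_mul_self]
        calc (m x * |c x|) * (m x * |c x|) = (m x * m x) * (|c x| * |c x|) := by ring
          _ = (m x * c x) ^ 2 := by rw [this]; ring
    exact_mod_cast hr
  have hmsqM : msqrt (S * eveState l P y * S) = T := msqrt_eq hTpsd hT2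
  -- compute the fidelity
  have htrace : fidelity (eveState l P y) (eveState l P y') =
      ∑ x, m x * |c x| * cc l P y' y' x := by
    rw [fidelity, hmsq', hmsqM, hT, Matrix.trace_sum]
    have : ∀ x : Fin l → ZMod 2, (((m x * |c x| : ℝ) : ℂ) •
        vecMulVec (v' x) (v' x)).trace = ((m x * |c x| * cc l P y' y' x : ℝ) : ℂ) := by
      intro x
      rw [Matrix.trace_smul, trace_vmv, eveKet_dot l P hP0 y' y' x x, if_pos rfl,
        smul_eq_mul]
      push_cast
      ring
    simp_rw [this]
    rw [← Complex.ofReal_sum, Complex.ofReal_re]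
  rw [htrace]
  -- the per-term lower bound
  have hbound : ∀ x, 2 * P (x, 0) - m x ≤ m x * |c x| * cc l P y' y' x := by
    intro x
    by_cases h : margP l P x = 0
    · have h0 : P (x, 0) = 0 := margP_eq_zero l P hP0 x h 0
      rw [cc_diag l P hP0 y' x, if_pos h]
      have : m x = 0 := h
      simp [h0, this]
    · rw [cc_diag l P hP0 y' x, if_neg h, mul_one]
      set eps := fun z : Fin l → ZMod 2 =>
        (-1 : ℝ) ^ ((z ⬝ᵥ y : ZMod 2)).val * (-1 : ℝ) ^ ((z ⬝ᵥ y' : ZMod 2)).val with heps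
      have hcx : c x = ∑ z, eps z * (P (x, z) / margP l P x) := rfl
      have hmx : m x = margP l P x := rfl
      have hkey : m x * c x = ∑ z, eps z * P (x, z) := by
        rw [hcx, Finset.mul_sum]
        refine Finset.sum_congr rfl fun z _ => ?_
        rw [hmx]
        field_simp
      have habs : m x * |c x| = |m x * c x| := by
        rw [abs_mul, abs_of_nonneg (hmnn x)]
      have hsum : ∑ z, eps z * P (x, z) + m x = ∑ z, (eps z + 1) * P (x, z) := by
        have hmx2 : m x = ∑ z, P (x, z) := rfl
        rw [hmx2, ← Finset.sum_add_distrib]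
        exact Finset.sum_congr rfl fun z _ => by ring
      have hterm : (eps 0 + 1) * P (x, 0) ≤ ∑ z, (eps z + 1) * P (x, z) := by
        refine Finset.single_le_sum (f := fun z : Fin l → ZMod 2 => (eps z + 1) * P (x, z))
          (fun z _ => ?_) (Finset.mem_univ (0 : Fin l → ZMod 2))
        have h2 := neg_one_le_eps ((z ⬝ᵥ y : ZMod 2)).val ((z ⬝ᵥ y' : ZMod 2)).val
        have h3 : eps z = (-1 : ℝ) ^ ((z ⬝ᵥ y : ZMod 2)).val *
            (-1 : ℝ) ^ ((z ⬝ᵥ y' : ZMod 2)).val := rfl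
        exact mul_nonneg (by rw [h3]; linarith) (hP0 _)
      have heps0 : eps 0 = 1 := by
        rw [heps]
        simp [zero_dotProduct]
      rw [heps0] at hterm
      have h1 : 2 * P (x, 0) - m x ≤ ∑ z, eps z * P (x, z) := by linarith
      calc 2 * P (x, 0) - m x ≤ ∑ z, eps z * P (x, z) := h1
        _ = m x * c x := hkey.symm
        _ ≤ |m x * c x| := le_abs_self _
        _ = m x * |c x| := habs.symm
  have hsum_m : ∑ x, m x = 1 := by
    rw [← hP1, Fintype.sum_prod_type]
    rfl
  rw [ge_iff_le]
  calc (1 : ℝ) - 2 * (1 - ∑ x, P (x, 0)) = ∑ x, (2 * P (x, 0) - m x) := by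
        rw [Finset.sum_sub_distrib, ← Finset.mul_sum, hsum_m]; ring
    _ ≤ ∑ x, m x * |c x| * cc l P y' y' x := Finset.sum_le_sum fun x _ => hbound x
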